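/- For A_2, the Brion operator factorization reads: Σ_{w ∈ S_3} w ∘ (multiplication by G_1 G_2) = D_1 ∘ (r_2 d_1 + d_2 + 1), where W = S_3 is generated by r_1, r_2, D_1 = d_1 + 1 is the Demazure operator for α_1, and G_k = (1 - e^{-α_k})^{-1}. -/

import Mathlib

/-- The Demazure operator `D(f) = (f - a * r(f)) / (1 - a)`, `a = e^{-α_k}`. -/
noncomputable def demOp {K : Type*} [Field K] (a : K) (r : K → K) (f : K) : K :=
  (f - a * r f) / (1 - a)

/-- The modified Demazure operator `d_k := D_k - 1`. -/
noncomputable def modDemOp {K : Type*} [Field K] (a : K) (r : K → K) (f : K) : K :=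
  demOp a r f - f

set_option maxHeartbeats 4000000 in
/-- For `A_2` (simple roots `α, β` with `(α, β^∨) = (β, α^∨) = -1`, Weyl group
`S_3 = {1, r_1, r_2, r_1r_2, r_2r_1, r_1r_2r_1}`), the Brion operator
factorization reads `Σ_{w ∈ S_3} w ∘ G_1 G_2 = D_1 ∘ (r_2 d_1 + d_2 + 1)`,
the right factor acting first. -/
theorem brion_factorization_A2 {P K : Type*} [AddCommGroup P] [Field K]
    (e : P → K) (he0 : e 0 = 1) (hadd : ∀ μ ν : P, e (μ + ν) = e μ * e ν)
    (hne : ∀ μ : P, μ ≠ 0 → e μ ≠ 1)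
    (α β : P)
    (hind : ∀ a b : ℤ, a • α + b • β = 0 → a = 0 ∧ b = 0)
    (ρ₁ ρ₂ : P →+ P)
    (hρ₁α : ρ₁ α = -α) (hρ₁β : ρ₁ β = α + β)
    (hρ₂β : ρ₂ β = -β) (hρ₂α : ρ₂ α = α + β)
    (r₁ r₂ : K ≃+* K)
    (hr₁ : ∀ μ : P, r₁ (e μ) = e (ρ₁ μ)) (hr₂ : ∀ μ : P, r₂ (e μ) = e (ρ₂ μ))
    (f : K) :
    (fun g : K => g + r₁ g + r₂ g + r₁ (r₂ g) + r₂ (r₁ g) + r₁ (r₂ (r₁ g)))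
        ((1 - e (-α))⁻¹ * ((1 - e (-β))⁻¹ * f)) =
      demOp (e (-α)) (⇑r₁)
        (r₂ (modDemOp (e (-α)) (⇑r₁) f) + modDemOp (e (-β)) (⇑r₂) f + f) := by
  -- abbreviations
  set a := e (-α) with ha
  set b := e (-β) with hb
  -- basic nonvanishing
  have hα0 : α ≠ 0 := fun h => by
    have := (hind 1 0 (by simp [h])).1; omega
  have hβ0 : β ≠ 0 := fun h => by
    have := (hind 0 1 (by simp [h])).2; omega
  have hαβ0 : α + β ≠ 0 := fun h => by
    have := (hind 1 1 (by simpa using h)).1; omega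
  have hmul : ∀ μ ν : P, e (μ + ν) = e μ * e ν := hadd
  have hinv : ∀ μ : P, e μ * e (-μ) = 1 := fun μ => by
    rw [← hmul]; simp [he0]
  have ha0 : a ≠ 0 := fun h => by
    have := hinv α; rw [← ha] at this; simp [h] at this
  have hb0 : b ≠ 0 := fun h => by
    have := hinv β; rw [← hb] at this; simp [h] at this
  have heα : e α = a⁻¹ := by
    field_simp; have := hinv α; rw [← ha] at this; linear_combination this
  have heβ : e β = b⁻¹ := by
    field_simp; have := hinv β; rw [← hb] at this; linear_combination this
  have heab : e (-α + -β) = a * b := by rw [hmul]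
  have ha1 : (1 : K) - a ≠ 0 := fun h => by
    have : a = 1 := by linear_combination -h
    exact hne (-α) (by simpa using hα0) this
  have hb1 : (1 : K) - b ≠ 0 := fun h => by
    have : b = 1 := by linear_combination -h
    exact hne (-β) (by simpa using hβ0) this
  have hab1 : (1 : K) - a * b ≠ 0 := fun h => by
    have : e (-α + -β) = 1 := by rw [heab]; linear_combination -h
    refine hne (-α + -β) (fun hh => hαβ0 ?_) this
    have hh' : -(α + β) = 0 := by rw [neg_add]; exact hh
    exact neg_eq_zero.mp hh'
  -- action of r₁, r₂ on a, b
  have hr₁a : r₁ a = a⁻¹ := by rw [ha, hr₁, map_neg, hρ₁α, neg_neg, heα]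
  have hr₁b : r₁ b = a * b := by
    rw [hb, hr₁, map_neg, hρ₁β, neg_add, heab]
  have hr₂b : r₂ b = b⁻¹ := by rw [hb, hr₂, map_neg, hρ₂β, neg_neg, heβ]
  have hr₂a : r₂ a = a * b := by
    rw [ha, hr₂, map_neg, hρ₂α, neg_add, heab]
  -- inverses nonvanishing
  have ha1' : (1 : K) - a⁻¹ ≠ 0 := fun h => by
    apply ha1; field_simp at h ⊢; linear_combination -h
  have hb1' : (1 : K) - b⁻¹ ≠ 0 := fun h => by
    apply hb1; field_simp at h ⊢; linear_combination -h
  have hab1' : (1 : K) - (a * b)⁻¹ ≠ 0 := fun h => by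
    apply hab1; field_simp at h ⊢; linear_combination -h
  have e1 : (1 : K) - a⁻¹ = -((1 - a) / a) := by field_simp; ring
  have e2 : (1 : K) - b⁻¹ = -((1 - b) / b) := by field_simp; ring
  have e3 : (1 : K) - (a * b)⁻¹ = -((1 - a * b) / (a * b)) := by
    field_simp; ring
  have c1 : a⁻¹ * (a * b) = b := inv_mul_cancel_left₀ ha0 b
  have c2 : a * b * b⁻¹ = a := mul_inv_cancel_right₀ hb0 a
  have c3 : b * (a * b)⁻¹ = a⁻¹ := by
    field_simp
  simp only [demOp, modDemOp, map_add, map_sub, map_mul, map_div₀, map_one, map_neg,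
    map_inv₀, hr₁a, hr₁b, hr₂a, hr₂b, inv_inv, c1, c2, c3, e1, e2, e3]
  have hD : ((1 - a) * (1 - b) * (1 - a * b) * (a * b)) ≠ 0 :=
    mul_ne_zero (mul_ne_zero (mul_ne_zero ha1 hb1) hab1) (mul_ne_zero ha0 hb0)
  have t1 : (1 - a)⁻¹ * ((1 - b)⁻¹ * f)
      = f * ((1 - a * b) * (a * b)) / ((1 - a) * (1 - b) * (1 - a * b) * (a * b)) := by
    rw [eq_div_iff hD]
    field_simp
  have t2 : (-((1 - a) / a))⁻¹ * ((1 - a * b)⁻¹ * r₁ f)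
      = -(a * a * b * (1 - b) * r₁ f) / ((1 - a) * (1 - b) * (1 - a * b) * (a * b)) := by
    rw [eq_div_iff hD, inv_neg, inv_div]
    field_simp
  have t3 : (1 - a * b)⁻¹ * ((-((1 - b) / b))⁻¹ * r₂ f)
      = -(a * b * b * (1 - a) * r₂ f) / ((1 - a) * (1 - b) * (1 - a * b) * (a * b)) := by
    rw [eq_div_iff hD, inv_neg, inv_div]
    field_simp
  have t4 : (1 - b)⁻¹ * ((-((1 - a * b) / (a * b)))⁻¹ * r₁ (r₂ f))
      = -((a * b) ^ 2 * (1 - a) * r₁ (r₂ f)) / ((1 - a) * (1 - b) * (1 - a * b) * (a * b)) := by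
    rw [eq_div_iff hD, inv_neg, inv_div]
    have hba : (1 : K) - b * a ≠ 0 := by rwa [mul_comm b a]
    field_simp
  have t5 : (-((1 - a * b) / (a * b)))⁻¹ * ((1 - a)⁻¹ * r₂ (r₁ f))
      = -((a * b) ^ 2 * (1 - b) * r₂ (r₁ f)) / ((1 - a) * (1 - b) * (1 - a * b) * (a * b)) := by
    rw [eq_div_iff hD, inv_neg, inv_div]
    field_simp
  have t6 : (-((1 - b) / b))⁻¹ * ((-((1 - a) / a))⁻¹ * r₁ (r₂ (r₁ f)))
      = (a * b) ^ 2 * (1 - a * b) * r₁ (r₂ (r₁ f)) / ((1 - a) * (1 - b) * (1 - a * b) * (a * b)) := by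
    rw [eq_div_iff hD, inv_neg, inv_div, inv_neg, inv_div]
    field_simp
  have tR : ((r₂ f - a * b * r₂ (r₁ f)) / (1 - a * b) - r₂ f + ((f - b * r₂ f) / (1 - b) - f) + f -
        a * ((r₁ (r₂ f) - b * r₁ (r₂ (r₁ f))) / (1 - b) - r₁ (r₂ f)
          + ((r₁ f - a * b * r₁ (r₂ f)) / (1 - a * b) - r₁ f) + r₁ f)) / (1 - a)
      = (a * b * ((r₂ f - a * b * r₂ (r₁ f)) * (1 - b) - r₂ f * (1 - b) * (1 - a * b)
          + (f - b * r₂ f) * (1 - a * b)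
          - a * ((r₁ (r₂ f) - b * r₁ (r₂ (r₁ f))) * (1 - a * b) - r₁ (r₂ f) * (1 - b) * (1 - a * b)
            + (r₁ f - a * b * r₁ (r₂ f)) * (1 - b))))
        / ((1 - a) * (1 - b) * (1 - a * b) * (a * b)) := by
    rw [eq_div_iff hD]
    field_simp
    ring
  rw [t1, t2, t3, t4, t5, t6, tR]
  ring
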